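/- Random embedding captures the effective subspace: let f: ℝᴰ → ℝ have effective dimensionality d_e, i.e., f(x) = h(Qx) where the first d_e rows of the orthogonal matrix Q span the effective subspace and h depends only on its first d_e coordinates. Then for any x⁎ ∈ ℝᴰ, with probability 1 over a D×d Gaussian random matrix A with d ≥ d_e, there exists y ∈ ℝᵈ such that f(Ay) = f(x⁎). -/

import Mathlib

open MeasureTheory ProbabilityTheory Matrix

namespace RemboAux

lemma measurable_mveval {σ : Type*} (p : MvPolynomial σ ℝ) :
    Measurable fun x : σ → ℝ => MvPolynomial.eval x p := by
  have h : (fun x : σ → ℝ => MvPolynomial.eval x p)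
      = fun x => ∑ dd ∈ p.support, MvPolynomial.coeff dd p * ∏ i ∈ dd.support, x i ^ dd i := by
    funext x; rw [MvPolynomial.eval_eq]
  rw [h]
  refine Finset.measurable_sum _ fun dd _ => Measurable.const_mul ?_ _
  exact Finset.measurable_prod _ fun i _ => (measurable_pi_apply i).pow_const _

lemma gaussian_pi_poly_null :
    ∀ (n : ℕ) (p : MvPolynomial (Fin n) ℝ), p ≠ 0 →
    (Measure.pi fun _ : Fin n => gaussianReal 0 1) {x | MvPolynomial.eval x p = 0} = 0 := by
  intro n
  induction n with
  | zero =>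
    intro p hp
    obtain ⟨c, rfl⟩ := MvPolynomial.C_surjective (Fin 0) p
    have hc : c ≠ 0 := fun hc0 => hp (by rw [hc0, map_zero])
    simp [hc]
  | succ n ih =>
    intro p hp
    set γ : Measure ℝ := gaussianReal 0 1 with hγ
    set ν : Measure (Fin n → ℝ) := Measure.pi fun _ => gaussianReal 0 1 with hν
    set q := MvPolynomial.finSuccEquiv ℝ n p with hqdef
    have hq0 : q ≠ 0 := fun h0 =>
      hp ((MvPolynomial.finSuccEquiv ℝ n).injective (by rw [← hqdef, h0, map_zero]))
    have hc0 : q.leadingCoeff ≠ 0 := Polynomial.leadingCoeff_ne_zero.mpr hq0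
    -- the set in the product space
    set E' : Set (ℝ × (Fin n → ℝ)) :=
      {ys | MvPolynomial.eval (Fin.cons ys.1 ys.2) p = 0} with hE'def
    have hcons : Measurable fun ys : ℝ × (Fin n → ℝ) => (Fin.cons ys.1 ys.2 : Fin (n+1) → ℝ) := by
      apply measurable_pi_lambda
      intro i
      refine Fin.cases ?_ ?_ i
      · simpa using measurable_fst
      · intro j
        simpa [Function.comp_def] using (measurable_pi_apply j).comp measurable_snd
    have hE' : MeasurableSet E' :=
      ((measurable_mveval p).comp hcons) (measurableSet_singleton (0 : ℝ))
    have hmp := measurePreserving_piFinSuccAbove (fun _ : Fin (n+1) => gaussianReal 0 1) 0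
    have hpre : {x : Fin (n+1) → ℝ | MvPolynomial.eval x p = 0}
        = (MeasurableEquiv.piFinSuccAbove (fun _ : Fin (n+1) => ℝ) 0) ⁻¹' E' := by
      ext x
      simp only [Set.mem_preimage, hE'def, Set.mem_setOf_eq,
        MeasurableEquiv.piFinSuccAbove_apply, Fin.insertNthEquiv_symm_apply,
        Fin.removeNth_zero, Fin.cons_self_tail]
    have hswap : MeasurableSet (Prod.swap ⁻¹' E' : Set ((Fin n → ℝ) × ℝ)) :=
      measurable_swap hE'
    have hmeas : (Measure.pi fun _ : Fin (n+1) => gaussianReal 0 1)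
          {x | MvPolynomial.eval x p = 0}
        = (ν.prod γ) (Prod.swap ⁻¹' E') := by
      rw [hpre, hmp.measure_preimage hE'.nullMeasurableSet]
      have h1 : (ν.prod γ).map Prod.swap = γ.prod ν := Measure.prod_swap
      rw [← h1, Measure.map_apply measurable_swap hE']
    rw [hmeas, Measure.measure_prod_null hswap]
    -- a.e. section is null
    have hae : ∀ᵐ s ∂ν, MvPolynomial.eval s q.leadingCoeff ≠ 0 := by
      rw [MeasureTheory.ae_iff]
      simpa [not_not] using ih q.leadingCoeff hc0
    filter_upwards [hae] with s hs
    have hqs : q.map (MvPolynomial.eval s) ≠ 0 := by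
      intro h0
      apply hs
      have hcoeff : (q.map (MvPolynomial.eval s)).coeff q.natDegree
          = MvPolynomial.eval s q.leadingCoeff := Polynomial.coeff_map _ _
      rw [h0] at hcoeff
      simpa using hcoeff.symm
    have hsub : (Prod.mk s ⁻¹' (Prod.swap ⁻¹' E'))
        ⊆ {a : ℝ | (q.map (MvPolynomial.eval s)).IsRoot a} := by
      intro a ha
      have : MvPolynomial.eval (Fin.cons a s) p = 0 := ha
      rw [MvPolynomial.eval_eq_eval_mv_eval'] at this
      exact this
    have hfin : {a : ℝ | (q.map (MvPolynomial.eval s)).IsRoot a}.Finite :=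
      Polynomial.finite_setOf_isRoot hqs
    have hvol : (volume : Measure ℝ) {a : ℝ | (q.map (MvPolynomial.eval s)).IsRoot a} = 0 :=
      hfin.measure_zero _
    have : γ (Prod.mk s ⁻¹' (Prod.swap ⁻¹' E')) = 0 :=
      measure_mono_null hsub ((gaussianReal_absolutelyContinuous 0 one_ne_zero) hvol)
    simpa using this

lemma measurePreserving_comp_equiv {ι κ : Type*} [Fintype ι] [Fintype κ] (e : κ ≃ ι) :
    MeasurePreserving (fun x : ι → ℝ => x ∘ e)
      (Measure.pi fun _ : ι => gaussianReal 0 1) (Measure.pi fun _ : κ => gaussianReal 0 1) := by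
  have hF : Measurable fun x : ι → ℝ => x ∘ e :=
    measurable_pi_lambda _ fun k => measurable_pi_apply (e k)
  refine ⟨hF, (Measure.pi_eq fun s hs => ?_).symm⟩
  rw [Measure.map_apply hF (MeasurableSet.univ_pi hs)]
  have hset : (fun x : ι → ℝ => x ∘ e) ⁻¹' (Set.pi Set.univ s)
      = Set.pi Set.univ (fun i => s (e.symm i)) := by
    ext x
    simp only [Set.mem_preimage, Set.mem_univ_pi, Function.comp_apply]
    constructor
    · intro hx i
      simpa using hx (e.symm i)
    · intro hx k
      simpa using hx (e k)
  rw [hset, Measure.pi_pi]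
  exact Fintype.prod_equiv e.symm _ _ fun i => rfl

lemma gaussian_pi_poly_null' {ι : Type*} [Fintype ι] (p : MvPolynomial ι ℝ) (hp : p ≠ 0) :
    (Measure.pi fun _ : ι => gaussianReal 0 1) {x | MvPolynomial.eval x p = 0} = 0 := by
  classical
  set e := Fintype.equivFin ι with he
  set p' := MvPolynomial.rename e p with hp'def
  have hp' : p' ≠ 0 := fun h0 =>
    hp ((MvPolynomial.rename_injective e e.injective) (h0.trans (map_zero _).symm))
  have hmp := measurePreserving_comp_equiv (ι := ι) e.symm
  have hset : {x : ι → ℝ | MvPolynomial.eval x p = 0}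
      = (fun x : ι → ℝ => x ∘ e.symm) ⁻¹' {y | MvPolynomial.eval y p' = 0} := by
    ext x
    simp only [Set.mem_setOf_eq, Set.mem_preimage, hp'def]
    rw [MvPolynomial.eval_rename]
    have : (x ∘ ⇑e.symm) ∘ ⇑e = x := funext fun i => by simp
    rw [this]
  have hZ : MeasurableSet {y : Fin (Fintype.card ι) → ℝ | MvPolynomial.eval y p' = 0} :=
    (measurable_mveval p') (measurableSet_singleton (0 : ℝ))
  rw [hset, hmp.measure_preimage hZ.nullMeasurableSet]
  exact gaussian_pi_poly_null _ p' hp'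

lemma measurePreserving_uncurry (D d : ℕ) :
    MeasurePreserving (fun A : Fin D → Fin d → ℝ => fun jk : Fin D × Fin d => A jk.1 jk.2)
      (Measure.pi fun _ : Fin D => Measure.pi fun _ : Fin d => gaussianReal 0 1)
      (Measure.pi fun _ : Fin D × Fin d => gaussianReal 0 1) := by
  have hF : Measurable (fun A : Fin D → Fin d → ℝ => fun jk : Fin D × Fin d => A jk.1 jk.2) :=
    measurable_pi_lambda _ fun jk => (measurable_pi_apply jk.2).comp (measurable_pi_apply jk.1)
  refine ⟨hF, (Measure.pi_eq fun s hs => ?_).symm⟩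
  rw [Measure.map_apply hF (MeasurableSet.univ_pi hs)]
  have hset : (fun A : Fin D → Fin d → ℝ => fun jk : Fin D × Fin d => A jk.1 jk.2) ⁻¹'
        (Set.pi Set.univ s)
      = Set.pi Set.univ fun j : Fin D => Set.pi Set.univ fun k : Fin d => s (j, k) := by
    ext A
    simp only [Set.mem_preimage, Set.mem_univ_pi]
    exact ⟨fun hA j k => hA (j, k), fun hA jk => hA jk.1 jk.2⟩
  rw [hset, Measure.pi_pi]
  simp_rw [Measure.pi_pi]
  exact (Fintype.prod_prod_type fun jk : Fin D × Fin d => (gaussianReal 0 1) (s jk)).symm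

end RemboAux

/-- Random embedding captures the effective subspace (REMBO, Wang et al. 2013):
if `f : ℝᴰ → ℝ` has effective dimensionality `d_e`, i.e. `f x = h (Q x)` for an
orthogonal matrix `Q` and a function `h` depending only on its first `d_e`
coordinates, then for any `x⁎`, almost surely over a `D × d` standard Gaussian
matrix `A` with `d ≥ d_e`, there exists `y ∈ ℝᵈ` with `f (A y) = f x⁎`. -/
theorem rembo_embedding_captures_optimum
    (D d de : ℕ) (hde : de ≤ d) (hdD : d ≤ D)
    (f h : (Fin D → ℝ) → ℝ)
    (Q : Matrix (Fin D) (Fin D) ℝ) (hQ : Q.transpose * Q = 1)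
    (hh : ∀ x y : Fin D → ℝ, (∀ i : Fin D, (i : ℕ) < de → x i = y i) → h x = h y)
    (hf : ∀ x, f x = h (Q.mulVec x))
    (xstar : Fin D → ℝ) :
    ∀ᵐ A ∂(Measure.pi fun _ : Fin D => Measure.pi fun _ : Fin d => gaussianReal 0 1),
      ∃ y : Fin d → ℝ, f ((Matrix.of A).mulVec y) = f xstar := by
  classical
  have hdeD : de ≤ D := hde.trans hdD
  set ιe : Fin de → Fin D := Fin.castLE hdeD with hιe
  -- the matrix of polynomials corresponding to the top `de` rows of `Q * A`
  set Bp : Matrix (Fin de) (Fin d) (MvPolynomial (Fin D × Fin d) ℝ) :=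
    Matrix.of (fun i k => ∑ a : Fin D, MvPolynomial.C (Q (ιe i) a) * MvPolynomial.X (a, k))
    with hBp
  set p : MvPolynomial (Fin D × Fin d) ℝ := (Bp * Bpᵀ).det with hpdef
  -- real matrix obtained by evaluation
  set Br : (Fin D × Fin d → ℝ) → Matrix (Fin de) (Fin d) ℝ :=
    fun x => Matrix.of (fun i k => ∑ a : Fin D, Q (ιe i) a * x (a, k)) with hBrdef
  have heval : ∀ x : Fin D × Fin d → ℝ,
      MvPolynomial.eval x p = ((Br x) * (Br x)ᵀ).det := by
    intro x
    have h1 : (MvPolynomial.eval x) ((Bp * Bpᵀ).det)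
        = ((Bp * Bpᵀ).map (MvPolynomial.eval x)).det := RingHom.map_det _ _
    have h2 : Bp.map (MvPolynomial.eval x) = Br x := by
      ext i k
      simp [hBp, hBrdef, Matrix.map_apply, map_sum]
    rw [hpdef, h1, Matrix.map_mul, Matrix.transpose_map, h2]
  -- the polynomial is nonzero: evaluate at a suitable point built from `Q`
  have hQQ : Q * Qᵀ = 1 := mul_eq_one_comm.mp hQ
  have hp0 : p ≠ 0 := by
    intro h0
    set x0 : Fin D × Fin d → ℝ := fun jk => Q (Fin.castLE hdD jk.2) jk.1 with hx0
    have hBr0 : ∀ (i : Fin de) (k : Fin d),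
        Br x0 i k = if Fin.castLE hde i = k then (1:ℝ) else 0 := by
      intro i k
      have hcalc : Br x0 i k = (Q * Qᵀ) (ιe i) (Fin.castLE hdD k) := by
        simp [hBrdef, hx0, Matrix.mul_apply, Matrix.transpose_apply]
      rw [hcalc, hQQ, Matrix.one_apply]
      have hiff : (ιe i = Fin.castLE hdD k) ↔ (Fin.castLE hde i = k) := by
        simp [Fin.ext_iff, hιe]
      exact if_congr hiff rfl rfl
    have hB1 : Br x0 * (Br x0)ᵀ = 1 := by
      ext i j
      simp only [Matrix.mul_apply, Matrix.transpose_apply, hBr0, Matrix.one_apply]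
      rw [Finset.sum_congr rfl (fun k _ => by rw [ite_mul, one_mul, zero_mul]),
        Finset.sum_ite_eq]
      simp [Fin.ext_iff, eq_comm]
    have h1 := heval x0
    rw [h0, map_zero, hB1, Matrix.det_one] at h1
    exact zero_ne_one h1
  -- almost surely the evaluated determinant is nonzero
  have hZ : MeasurableSet {x : Fin D × Fin d → ℝ | MvPolynomial.eval x p = 0} :=
    (RemboAux.measurable_mveval p) (measurableSet_singleton (0 : ℝ))
  have hnull' := RemboAux.gaussian_pi_poly_null' p hp0
  have hmpU := RemboAux.measurePreserving_uncurry D d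
  have hnull : (Measure.pi fun _ : Fin D => Measure.pi fun _ : Fin d => gaussianReal 0 1)
      ((fun A : Fin D → Fin d → ℝ => fun jk : Fin D × Fin d => A jk.1 jk.2) ⁻¹'
        {x | MvPolynomial.eval x p = 0}) = 0 := by
    rw [hmpU.measure_preimage hZ.nullMeasurableSet]
    exact hnull'
  rw [MeasureTheory.ae_iff]
  refine measure_mono_null ?_ hnull
  intro A hA
  simp only [Set.mem_setOf_eq, not_exists] at hA
  by_contra hne
  simp only [Set.mem_preimage, Set.mem_setOf_eq] at hne
  -- from nonvanishing determinant, construct `y`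
  set FA : Fin D × Fin d → ℝ := fun jk => A jk.1 jk.2 with hFA
  have hdet : ((Br FA) * (Br FA)ᵀ).det ≠ 0 := by
    rw [← heval]
    exact hne
  set M := Br FA with hM
  have hu : IsUnit (M * Mᵀ).det := isUnit_iff_ne_zero.mpr hdet
  set t : Fin de → ℝ := fun i => Q.mulVec xstar (ιe i) with ht
  set y : Fin d → ℝ := Mᵀ.mulVec ((M * Mᵀ)⁻¹.mulVec t) with hy
  have hMy : M.mulVec y = t := by
    rw [hy, Matrix.mulVec_mulVec, Matrix.mulVec_mulVec, Matrix.mul_nonsing_inv _ hu,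
      Matrix.one_mulVec]
  refine hA y ?_
  rw [hf, hf]
  apply hh
  intro i hi
  have hιei : ιe ⟨(i : ℕ), hi⟩ = i := Fin.ext (by simp [hιe])
  have hlhs : Q.mulVec ((Matrix.of A).mulVec y) i = M.mulVec y ⟨(i : ℕ), hi⟩ := by
    simp only [Matrix.mulVec, dotProduct, hM, hBrdef, hFA, Matrix.of_apply, hιei,
      Finset.mul_sum, Finset.sum_mul, mul_assoc]
    exact Finset.sum_comm
  rw [hlhs, hMy]
  simp only [ht, hιei]
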